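/- arXiv:1601.05778 — 3 statements merged into one kernel-verified Lean document; each statement's English description precedes it below -/
import Mathlib

section
/- Let $r_1, \ldots, r_l$ be complex numbers with positive real parts. Then there exist complex numbers $\rho_1, \ldots, \rho_\tau$ with positive real parts that are linearly independent over $\mathbb{Z}$, such that the additive semigroup generated by $r_1, \ldots, r_l$ is contained in the additive semigroup generated by $\rho_1, \ldots, \rho_\tau$. -/
/-- `x` is a nonnegative rational combination of the family `q`. -/
def QRep {τ : ℕ} (q : Fin τ → ℂ) (x : ℂ) : Prop :=
  ∃ κ : Fin τ → ℚ, (∀ j, 0 ≤ κ j) ∧ x = ∑ j, (κ j : ℂ) * q j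

lemma QRep.self {τ : ℕ} (q : Fin τ → ℂ) (k : Fin τ) : QRep q (q k) := by
  refine ⟨fun j => if j = k then 1 else 0, fun j => by positivity, ?_⟩
  simp [apply_ite (fun (a : ℚ) => (a : ℂ)), ite_mul]

lemma QRep.comb {n τ : ℕ} (q : Fin τ → ℂ) (v : Fin n → ℂ) (hv : ∀ i, QRep q (v i))
    (c : Fin n → ℚ) (hc : ∀ i, 0 ≤ c i) : QRep q (∑ i, (c i : ℂ) * v i) := by
  choose κ hκ0 hκ using hv
  refine ⟨fun j => ∑ i, c i * κ i j, fun j => Finset.sum_nonneg fun i _ => mul_nonneg (hc i) (hκ0 i j), ?_⟩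
  have : ∀ j : Fin τ, ((∑ i, c i * κ i j : ℚ) : ℂ) * q j = ∑ i, (c i : ℂ) * ((κ i j : ℂ) * q j) := by
    intro j
    push_cast
    rw [Finset.sum_mul]
    exact Finset.sum_congr rfl fun i _ => by ring
  simp only [this]
  rw [Finset.sum_comm]
  simp only [← Finset.mul_sum, hκ]

lemma re_qsum {τ : ℕ} (c : Fin τ → ℚ) (e : Fin τ → ℂ) :
    (∑ j, (c j : ℂ) * e j).re = ∑ j, (c j : ℝ) * (e j).re := by
  rw [Complex.re_sum]
  exact Finset.sum_congr rfl fun j _ => by simp [Complex.mul_re]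

lemma step {τ : ℕ} (e : Fin τ → ℂ) (he : ∀ j, 0 < (e j).re)
    (hind : LinearIndependent ℚ e) (γ : Fin τ → ℚ)
    (hPre : 0 < (∑ j, (γ j : ℂ) * e j).re) :
    ∃ e' : Fin τ → ℂ, (∀ j, 0 < (e' j).re) ∧ LinearIndependent ℚ e' ∧
      (∀ j, QRep e' (e j)) ∧ QRep e' (∑ j, (γ j : ℂ) * e j) := by
  by_cases hall : ∀ j, 0 ≤ γ j
  · exact ⟨e, he, hind, fun j => QRep.self e j, ⟨γ, hall, rfl⟩⟩
  push_neg at hall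
  obtain ⟨j0, hj0⟩ := hall
  set β : Fin τ → ℚ := fun j => max (-(γ j)) 0 with hβ
  have hβ0 : ∀ j, 0 ≤ β j := fun j => le_max_right _ _
  set B : ℂ := ∑ j, (β j : ℂ) * e j with hBdef
  have hBre : 0 < B.re := by
    rw [hBdef, re_qsum]
    refine Finset.sum_pos' (fun j _ => mul_nonneg (by exact_mod_cast hβ0 j) (he j).le) ⟨j0, Finset.mem_univ _, ?_⟩
    have : (0:ℚ) < β j0 := by simp [hβ]; linarith
    exact mul_pos (by exact_mod_cast this) (he j0)
  set S : ℝ := ∑ j, ((max (γ j) 0 : ℚ) : ℝ) * (e j).re with hSdef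
  have hPS : (∑ j, (γ j : ℂ) * e j).re = S - B.re := by
    rw [re_qsum, hSdef, hBdef, re_qsum, ← Finset.sum_sub_distrib]
    refine Finset.sum_congr rfl fun j _ => ?_
    have : (γ j : ℝ) = ((max (γ j) 0 : ℚ) : ℝ) - ((β j : ℚ) : ℝ) := by
      rcases le_or_gt 0 (γ j) with h | h
      · have h1 : max (γ j) 0 = γ j := max_eq_left h
        have h2 : β j = 0 := max_eq_right (by linarith)
        rw [h1, h2]; push_cast; ring
      · have h1 : max (γ j) 0 = 0 := max_eq_right h.le
        have h2 : β j = -(γ j) := max_eq_left (by linarith)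
        rw [h1, h2]; push_cast; ring
    rw [this]; ring
  have hSB : B.re < S := by linarith [hPre, hPS.symm.le, hPS ▸ hPre]
  set u : Fin τ → ℝ := fun k => (γ k : ℝ) * (e k).re / B.re with hu
  set δ : ℝ := (S / B.re - 1) / (τ + 1) with hδdef
  have hδ : 0 < δ := by
    apply div_pos _ (by positivity)
    rw [sub_pos, lt_div_iff₀ hBre, one_mul]; exact hSB
  have hv : ∀ k, ∃ v : ℚ, 0 ≤ v ∧ ((0 < γ k) → ((v:ℝ) < u k ∧ u k - δ ≤ (v:ℝ))) ∧ (¬(0 < γ k) → v = 0) := by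
    intro k
    by_cases hk : 0 < γ k
    · have hupos : 0 < u k := div_pos (mul_pos (by exact_mod_cast hk) (he k)) hBre
      have hlt : max (u k - δ) 0 < u k := by
        rcases max_cases (u k - δ) 0 with ⟨h1, _⟩ | ⟨h1, _⟩ <;> rw [h1] <;> [linarith; exact hupos]
      obtain ⟨v, hv1, hv2⟩ := exists_rat_btwn hlt
      refine ⟨v, ?_, fun _ => ⟨hv2, ?_⟩, fun h => absurd hk h⟩
      · exact_mod_cast (le_max_right _ 0).trans hv1.le
      · exact ((le_max_left _ 0).trans hv1.le)
    · exact ⟨0, le_refl _, fun h => absurd h hk, fun _ => rfl⟩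
  choose v hv0 hvpos hvneg using hv
  set V : ℚ := ∑ k, v k with hVdef
  have hUS : ∑ k, (if 0 < γ k then u k else 0) = S / B.re := by
    rw [hSdef, Finset.sum_div]
    refine Finset.sum_congr rfl fun k _ => ?_
    by_cases hk : 0 < γ k
    · simp [hk, hu, max_eq_left hk.le]
    · simp [hk, hu, max_eq_right (not_lt.mp hk), div_eq_iff hBre.ne']
  have hV1 : (1:ℝ) ≤ (V:ℝ) := by
    have h1 : ∀ k : Fin τ, (if 0 < γ k then u k else 0) - δ ≤ (v k : ℝ) := by
      intro k
      by_cases hk : 0 < γ k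
      · simpa [hk] using (hvpos k hk).2
      · rw [if_neg hk, hvneg k hk]; push_cast; linarith
    have h2 : ∑ k, ((if 0 < γ k then u k else 0) - δ) ≤ ∑ k, (v k : ℝ) :=
      Finset.sum_le_sum fun k _ => h1 k
    rw [Finset.sum_sub_distrib, hUS] at h2
    have hcard : ∑ _k : Fin τ, δ = τ * δ := by simp [Finset.sum_const, nsmul_eq_mul]
    have : S / B.re - τ * δ ≤ (V:ℝ) := by
      rw [hVdef]; push_cast; rw [hcard] at h2; linarith
    have hX : (0:ℝ) < S / B.re - 1 := by
      rw [sub_pos]; exact (one_lt_div hBre).mpr hSB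
    have hδle : (τ:ℝ) * δ ≤ S / B.re - 1 := by
      rw [hδdef, mul_comm, div_mul_eq_mul_div, div_le_iff₀ (by positivity : (0:ℝ) < (τ:ℝ)+1)]
      nlinarith [hX]
    linarith
  have hV0 : (0:ℚ) < V := by
    have h : (1:ℚ) ≤ V := by exact_mod_cast hV1
    linarith
  set t : Fin τ → ℚ := fun k => v k / V with htdef
  have ht0 : ∀ k, 0 ≤ t k := fun k => div_nonneg (hv0 k) hV0.le
  have htneg : ∀ k, ¬(0 < γ k) → t k = 0 := fun k hk => by
    simp [htdef, hvneg k hk]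
  have htsum : ∑ k, t k = 1 := by
    simp only [htdef, ← Finset.sum_div, ← hVdef, div_self hV0.ne']
  have htu : ∀ k, 0 < γ k → (t k : ℝ) * B.re < (γ k : ℝ) * (e k).re := by
    intro k hk
    obtain ⟨h1, _⟩ := hvpos k hk
    have hukB : u k * B.re = (γ k:ℝ) * (e k).re := div_mul_cancel₀ _ hBre.ne'
    have htlev : (t k : ℝ) ≤ (v k : ℝ) := by
      have : (t k : ℝ) = (v k : ℝ) / (V : ℝ) := by rw [htdef]; push_cast; ring
      rw [this]
      exact div_le_self (by exact_mod_cast hv0 k) hV1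
    calc (t k:ℝ) * B.re ≤ (v k:ℝ) * B.re := mul_le_mul_of_nonneg_right htlev hBre.le
      _ < u k * B.re := mul_lt_mul_of_pos_right h1 hBre
      _ = _ := hukB
  set e' : Fin τ → ℂ := fun k => if 0 < γ k then (γ k : ℂ) * e k - (t k : ℂ) * B else e k with he'def
  have hre' : ∀ k, 0 < (e' k).re := by
    intro k
    by_cases hk : 0 < γ k
    · have h0 : e' k = (γ k : ℂ) * e k - (t k : ℂ) * B := by rw [he'def]; simp only [if_pos hk]
      have : (e' k).re = (γ k:ℝ) * (e k).re - (t k:ℝ) * B.re := by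
        rw [h0]; simp [Complex.sub_re, Complex.mul_re]
      rw [this]; linarith [htu k hk]
    · have h0 : e' k = e k := by rw [he'def]; simp only [if_neg hk]
      rw [h0]; exact he k
  have hB' : B = ∑ j, (β j : ℂ) * e' j := by
    rw [hBdef]
    refine Finset.sum_congr rfl fun j _ => ?_
    by_cases hj : 0 < γ j
    · have hβj : β j = 0 := max_eq_right (by simp [hβ]; linarith)
      simp [hβj]
    · have h0 : e' j = e j := by rw [he'def]; simp only [if_neg hj]
      rw [h0]
  have hind' : LinearIndependent ℚ e' := by
    rw [Fintype.linearIndependent_iff]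
    intro a ha
    have expand : ∑ k, a k • e' k
        = ∑ k, ((if 0 < γ k then a k * γ k else a k) - (∑ i, a i * t i) * β k) • e k := by
      have h1 : ∀ k, a k • e' k = (if 0 < γ k then a k * γ k else a k) • e k - (a k * t k) • B := by
        intro k
        by_cases hk : 0 < γ k
        · simp only [he'def, if_pos hk, Rat.smul_def]; push_cast; ring
        · simp only [he'def, if_neg hk, htneg k hk, mul_zero, Rat.smul_def]; push_cast; ring
      rw [Finset.sum_congr rfl (fun k _ => h1 k), Finset.sum_sub_distrib]
      have h2 : ∑ k, (a k * t k) • B = ∑ k, ((∑ i, a i * t i) * β k) • e k := by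
        rw [← Finset.sum_smul, hBdef, Finset.smul_sum]
        refine Finset.sum_congr rfl fun k _ => ?_
        rw [Rat.smul_def, Rat.smul_def]; push_cast; ring
      rw [h2, ← Finset.sum_sub_distrib]
      exact Finset.sum_congr rfl fun k _ => (sub_smul _ _ _).symm
    rw [expand] at ha
    have hc := Fintype.linearIndependent_iff.mp hind _ ha
    have hapos : ∀ k, 0 < γ k → a k = 0 := by
      intro k hk
      have hck := hc k
      rw [if_pos hk] at hck
      have hβk : β k = 0 := max_eq_right (by simp [hβ]; linarith)
      rw [hβk, mul_zero, sub_zero] at hck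
      exact (mul_eq_zero.mp hck).resolve_right (ne_of_gt hk)
    have hW : (∑ i, a i * t i) = 0 := Finset.sum_eq_zero fun i _ => by
      by_cases hi : 0 < γ i
      · rw [hapos i hi, zero_mul]
      · rw [htneg i hi, mul_zero]
    intro k
    by_cases hk : 0 < γ k
    · exact hapos k hk
    · have hck := hc k
      rw [if_neg hk, hW, zero_mul, sub_zero] at hck
      exact hck
  have hrep : ∀ k, QRep e' (e k) := by
    intro k
    by_cases hk : 0 < γ k
    · have hgk : (γ k : ℂ) ≠ 0 := by
        exact_mod_cast (ne_of_gt hk)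
      refine ⟨fun j => (if j = k then 1/γ k else 0) + t k * β j / γ k, ?_, ?_⟩
      · intro j
        apply add_nonneg
        · split_ifs with h
          · exact le_of_lt (by rw [one_div]; exact inv_pos.mpr hk)
          · exact le_refl 0
        · exact div_nonneg (mul_nonneg (ht0 k) (hβ0 j)) hk.le
      · have hsplit : ∀ j, (((if j = k then 1/γ k else 0) + t k * β j / γ k : ℚ) : ℂ) * e' j
            = (if j = k then ((1/γ k : ℚ):ℂ) * e' j else 0)
              + ((t k / γ k : ℚ):ℂ) * ((β j : ℂ) * e' j) := by
          intro j
          split_ifs with h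
          · push_cast; ring
          · push_cast; ring
        rw [Finset.sum_congr rfl (fun j _ => hsplit j), Finset.sum_add_distrib]
        rw [Finset.sum_ite_eq' Finset.univ k (fun j => ((1/γ k : ℚ):ℂ) * e' j)]
        rw [if_pos (Finset.mem_univ k), ← Finset.mul_sum, ← hB']
        have h0 : e' k = (γ k : ℂ) * e k - (t k : ℂ) * B := by rw [he'def]; simp only [if_pos hk]
        rw [h0]
        push_cast
        field_simp
        ring
    · have h0 : e' k = e k := by rw [he'def]; simp only [if_neg hk]
      rw [← h0]
      exact QRep.self e' k
  refine ⟨e', hre', hind', hrep, ?_⟩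
  refine ⟨fun j => if 0 < γ j then 1 else 0, fun j => by dsimp only; split_ifs <;> norm_num, ?_⟩
  have hsum_t : ∑ j, (if 0 < γ j then ((t j : ℚ):ℂ) else 0) = 1 := by
    have h1 : ∀ j, (if 0 < γ j then ((t j : ℚ):ℂ) else 0) = ((t j : ℚ):ℂ) := by
      intro j
      split_ifs with h
      · rfl
      · rw [htneg j h]; simp
    rw [Finset.sum_congr rfl fun j _ => h1 j]
    rw [← Rat.cast_sum, htsum, Rat.cast_one]
  have hnegB : ∑ j, (if 0 < γ j then (0:ℂ) else (γ j:ℂ) * e j) = -B := by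
    have h1 : ∑ j, ((if 0 < γ j then (0:ℂ) else (γ j:ℂ) * e j) + (β j:ℂ) * e j) = 0 := by
      refine Finset.sum_eq_zero fun j _ => ?_
      by_cases h : 0 < γ j
      · have hβj : β j = 0 := max_eq_right (by simp [hβ]; linarith)
        simp [h, hβj]
      · have hβj : β j = -(γ j) := max_eq_left (by simp [hβ]; linarith)
        rw [if_neg h, hβj]; push_cast; ring
    rw [Finset.sum_add_distrib, ← hBdef] at h1
    linear_combination h1
  calc ∑ j, (γ j:ℂ) * e j
      = ∑ j, ((if 0 < γ j then ((1:ℚ):ℂ) * e' j else 0)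
          + ((if 0 < γ j then ((t j:ℚ):ℂ) else 0) * B + (if 0 < γ j then (0:ℂ) else (γ j:ℂ) * e j))) := by
        refine Finset.sum_congr rfl fun j _ => ?_
        by_cases h : 0 < γ j
        · have h0 : e' j = (γ j : ℂ) * e j - (t j : ℂ) * B := by rw [he'def]; simp only [if_pos h]
          rw [if_pos h, if_pos h, if_pos h, h0]; push_cast; ring
        · rw [if_neg h, if_neg h, if_neg h]; ring
    _ = ∑ j, (if 0 < γ j then ((1:ℚ):ℂ) * e' j else 0)
          + ((∑ j, (if 0 < γ j then ((t j:ℚ):ℂ) else 0)) * B + ∑ j, (if 0 < γ j then (0:ℂ) else (γ j:ℂ) * e j)) := by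
        rw [Finset.sum_add_distrib, Finset.sum_add_distrib, Finset.sum_mul]
    _ = ∑ j, (if 0 < γ j then ((1:ℚ):ℂ) * e' j else 0) := by
        rw [hsum_t, hnegB]; ring
    _ = ∑ j, (((if 0 < γ j then (1:ℚ) else 0) : ℚ):ℂ) * e' j := by
        refine Finset.sum_congr rfl fun j _ => ?_
        split_ifs <;> simp

lemma aux : ∀ (l : ℕ) (r : Fin l → ℂ), (∀ i, 0 < (r i).re) →
    ∃ (τ : ℕ) (q : Fin τ → ℂ), (∀ j, 0 < (q j).re) ∧ LinearIndependent ℚ q ∧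
      ∀ i, QRep q (r i) := by
  intro l
  induction l with
  | zero =>
    intro r _
    exact ⟨0, Fin.elim0, fun j => j.elim0, linearIndependent_empty_type, fun i => i.elim0⟩
  | succ n ih =>
    intro r hr
    obtain ⟨τ, q, hq, hind, hrep⟩ := ih (fun i => r i.castSucc) (fun i => hr _)
    by_cases hmem : r (Fin.last n) ∈ Submodule.span ℚ (Set.range q)
    · rw [Submodule.mem_span_range_iff_exists_fun] at hmem
      obtain ⟨γ, hγ⟩ := hmem
      have hγ' : r (Fin.last n) = ∑ j, (γ j : ℂ) * q j := by
        rw [← hγ]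
        exact Finset.sum_congr rfl fun j _ => (Rat.smul_def _ _)
      have hPre : 0 < (∑ j, (γ j:ℂ) * q j).re := hγ' ▸ hr (Fin.last n)
      obtain ⟨e', hre', hind', hrepe, hrepP⟩ := step q hq hind γ hPre
      refine ⟨τ, e', hre', hind', ?_⟩
      intro i
      refine Fin.lastCases ?_ ?_ i
      · rw [hγ']; exact hrepP
      · intro i
        obtain ⟨κ, hκ0, hκ⟩ := hrep i
        rw [show r i.castSucc = ∑ j, (κ j:ℂ) * q j from hκ]
        exact QRep.comb e' q hrepe κ hκ0
    · refine ⟨τ+1, Fin.cons (r (Fin.last n)) q, ?_, ?_, ?_⟩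
      · intro j
        refine Fin.cases ?_ ?_ j
        · exact hr _
        · intro j; exact hq j
      · exact linearIndependent_fin_cons.mpr ⟨hind, hmem⟩
      · intro i
        refine Fin.lastCases ?_ ?_ i
        · exact QRep.self _ 0
        · intro i
          obtain ⟨κ, hκ0, hκ⟩ := hrep i
          refine ⟨Fin.cons 0 κ, ?_, ?_⟩
          · intro j
            refine Fin.cases ?_ ?_ j
            · exact le_refl 0
            · exact hκ0
          · rw [show r i.castSucc = ∑ j, (κ j:ℂ) * q j from hκ, Fin.sum_univ_succ]
            simp

/-- The additive semigroup generated by a finite family of complex numbers: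
all linear combinations with nonnegative integer coefficients, not all zero. -/
def addSemigroupGen {n : ℕ} (v : Fin n → ℂ) : Set ℂ :=
  {x | ∃ m : Fin n → ℕ, 0 < ∑ i, m i ∧ x = ∑ i, (m i : ℂ) * v i}

theorem stmt2 (l : ℕ) (r : Fin l → ℂ) (hr : ∀ i, 0 < (r i).re) :
    ∃ (τ : ℕ) (ρ : Fin τ → ℂ), (∀ i, 0 < (ρ i).re) ∧
      LinearIndependent ℤ ρ ∧
      addSemigroupGen r ⊆ addSemigroupGen ρ := by
  obtain ⟨τ, q, hq, hind, hrep⟩ := aux l r hr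
  choose κ hκ0 hκ using hrep
  set D : ℕ := ∏ i, ∏ j, (κ i j).den with hD
  have hDpos : 0 < D := Finset.prod_pos fun i _ => Finset.prod_pos fun j _ => (κ i j).pos
  have hD0 : (D:ℂ) ≠ 0 := Nat.cast_ne_zero.mpr hDpos.ne'
  have hDq0 : (D:ℚ) ≠ 0 := Nat.cast_ne_zero.mpr hDpos.ne'
  have hdvd : ∀ i j, ((κ i j).den : ℕ) ∣ D := by
    intro i j
    have h1 : (κ i j).den ∣ ∏ j', (κ i j').den :=
      Finset.dvd_prod_of_mem _ (Finset.mem_univ j)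
    have h2 : (∏ j', (κ i j').den) ∣ D :=
      Finset.dvd_prod_of_mem (fun i => ∏ j', (κ i j').den) (Finset.mem_univ i)
    exact h1.trans h2
  have hn : ∀ i j, ∃ nn : ℕ, (nn : ℚ) = κ i j * D := by
    intro i j
    obtain ⟨m, hm⟩ := hdvd i j
    refine ⟨(κ i j).num.toNat * m, ?_⟩
    have h0 : 0 ≤ (κ i j).num := Rat.num_nonneg.mpr (hκ0 i j)
    have h1 : (((κ i j).num.toNat : ℕ) : ℚ) = κ i j * (κ i j).den := by
      rw [Rat.mul_den_eq_num]
      exact_mod_cast Int.toNat_of_nonneg h0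
    push_cast [hm]
    push_cast at h1
    rw [h1]
    ring
  choose n hn using hn
  have hnC : ∀ i j, (n i j : ℂ) = (κ i j : ℂ) * D := by
    intro i j
    have h := congrArg (fun x : ℚ => (x : ℂ)) (hn i j)
    push_cast at h
    exact h
  refine ⟨τ, fun j => ((D:ℂ))⁻¹ * q j, ?_, ?_, ?_⟩
  · intro j
    show 0 < ((((D:ℝ):ℂ))⁻¹ * q j).re
    rw [← Complex.ofReal_inv, Complex.re_ofReal_mul]
    have hD0' : (0:ℝ) < ((D:ℝ))⁻¹ := by positivity
    exact mul_pos hD0' (hq j)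
  · have hQind : LinearIndependent ℚ (fun j => ((D:ℂ))⁻¹ * q j) := by
      rw [Fintype.linearIndependent_iff]
      intro g hg
      have h1 : ∑ j, g j • (((D:ℂ))⁻¹ * q j) = ((D:ℂ))⁻¹ * ∑ j, g j • q j := by
        rw [Finset.mul_sum]
        exact Finset.sum_congr rfl fun j _ => (mul_smul_comm _ _ _).symm
      rw [h1, mul_eq_zero] at hg
      have h2 : ∑ j, g j • q j = 0 := hg.resolve_left (inv_ne_zero hD0)
      exact Fintype.linearIndependent_iff.mp hind g h2
    refine LinearIndependent.restrict_scalars ?_ hQind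
    intro a b hab
    simpa [zsmul_eq_mul] using hab
  · rintro x ⟨m, hm, hxeq⟩
    refine ⟨fun j => ∑ i, m i * n i j, ?_, ?_⟩
    · obtain ⟨i0, _, hi0⟩ := Finset.exists_ne_zero_of_sum_ne_zero hm.ne'
      have hi0' : 0 < m i0 := Nat.pos_of_ne_zero hi0
      have hj0 : ∃ j0, n i0 j0 ≠ 0 := by
        by_contra hall
        push_neg at hall
        have hκ00 : ∀ j, κ i0 j = 0 := by
          intro j
          have := hn i0 j
          rw [hall j] at this
          have h2 : κ i0 j * D = 0 := by exact_mod_cast this.symm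
          exact (mul_eq_zero.mp h2).resolve_right hDq0
        have hz : r i0 = 0 := by
          rw [hκ i0]
          refine Finset.sum_eq_zero fun j _ => ?_
          rw [hκ00 j]; simp
        have hcontra := hr i0
        rw [hz] at hcontra
        simp at hcontra
      obtain ⟨j0, hj0⟩ := hj0
      have h1 : 0 < m i0 * n i0 j0 := Nat.mul_pos hi0' (Nat.pos_of_ne_zero hj0)
      calc 0 < m i0 * n i0 j0 := h1
        _ ≤ ∑ i, m i * n i j0 :=
          Finset.single_le_sum (f := fun i => m i * n i j0)
            (fun i _ => Nat.zero_le _) (Finset.mem_univ i0)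
        _ ≤ ∑ j, ∑ i, m i * n i j :=
          Finset.single_le_sum (f := fun j => ∑ i, m i * n i j)
            (fun j _ => Nat.zero_le _) (Finset.mem_univ j0)
    · calc x = ∑ i, (m i : ℂ) * r i := hxeq
        _ = ∑ i, (m i : ℂ) * ∑ j, (κ i j : ℂ) * q j := by
            refine Finset.sum_congr rfl fun i _ => by rw [← hκ i]
        _ = ∑ i, ∑ j, (m i : ℂ) * ((n i j : ℂ) * (((D:ℂ))⁻¹ * q j)) := by
            refine Finset.sum_congr rfl fun i _ => ?_
            rw [Finset.mul_sum]
            refine Finset.sum_congr rfl fun j _ => ?_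
            rw [hnC i j, mul_assoc ((κ i j : ℂ)) ((D:ℂ)), mul_inv_cancel_left₀ hD0]
        _ = ∑ j, ∑ i, (m i : ℂ) * ((n i j : ℂ) * (((D:ℂ))⁻¹ * q j)) := Finset.sum_comm
        _ = ∑ j, ((∑ i, m i * n i j : ℕ) : ℂ) * (((D:ℂ))⁻¹ * q j) := by
            refine Finset.sum_congr rfl fun j _ => ?_
            push_cast
            rw [Finset.sum_mul]
            exact Finset.sum_congr rfl fun i _ => by ring
end

section
/- Let $G$ be the additive semigroup generated by $r_1, r_2 \in \mathbb{C}$ with positive real parts, linearly independent over $\mathbb{Z}$; fix $k > 0$, an integer $p \geq 0$, and $s_\mu \in \mathbb{C}$ with $\mathrm{Re}\,s_\mu \geq 0$. Define Banach spaces $H^j = \{\eta = \sum_{\gamma \in G} a_\gamma z_1^{m_1} z_2^{m_2} : \|\eta\|_j = \sum_\gamma |\gamma|^j |a_\gamma| / |\Gamma(\gamma/k)| < \infty\}$, and the diagonal operator $\Delta(\sum a_\gamma z_1^{m_1} z_2^{m_2}) = \sum \gamma a_\gamma z_1^{m_1} z_2^{m_2}$. Then for integers $i > p$ and nonnegative integers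 $l_1, l_2$ with $\mathrm{Re}(l_1 r_1 + l_2 r_2) \geq (i - p)k$, the operator $\eta \mapsto z_1^{l_1} z_2^{l_2} (\Delta + s_\mu)^i \eta$ is a continuous (bounded) linear operator from $H^p$ to $H^0$. -/
open Complex MeasureTheory Set Function intervalIntegral

lemma ae_Ioo_restrict_Icc : ∀ᵐ t ∂(volume.restrict (Set.Icc (0:ℝ) 1)), t ∈ Set.Ioo (0:ℝ) 1 := by
  have h1 : ∀ᵐ (t:ℝ) ∂(volume.restrict (Set.Icc (0:ℝ) 1)), t ∈ Set.Icc (0:ℝ) 1 :=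
    ae_restrict_mem measurableSet_Icc
  have h2 : ∀ᵐ (t:ℝ), t ≠ 0 ∧ t ≠ 1 := by
    have a0 : ∀ᵐ (t:ℝ), t ≠ 0 := by
      rw [Filter.eventually_iff, mem_ae_iff]
      simpa using measure_singleton (0:ℝ)
    have a1 : ∀ᵐ (t:ℝ), t ≠ 1 := by
      rw [Filter.eventually_iff, mem_ae_iff]
      simpa using measure_singleton (1:ℝ)
    exact a0.and a1
  filter_upwards [h1, ae_restrict_of_ae h2] with t ht hne
  exact ⟨lt_of_le_of_ne ht.1 (Ne.symm hne.1), lt_of_le_of_ne ht.2 hne.2⟩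

lemma beta_norm_le {z c : ℂ} (hz : 0 < z.re) (m : ℕ) (hb : (m + 1 : ℝ) ≤ c.re) :
    ‖Complex.betaIntegral z c‖ ≤ (Nat.factorial m : ℝ) / z.re ^ (m + 1) := by
  have hc : 0 < c.re := lt_of_lt_of_le (by positivity) hb
  set x := z.re with hxdef
  have hxC : 0 < ((x:ℂ)).re := by simpa using hz
  have hnC : 0 < (((m:ℂ)+1)).re := by
    simp only [add_re, natCast_re, one_re]
    positivity
  have Izc := Complex.betaIntegral_convergent hz hc
  have Ixn := Complex.betaIntegral_convergent hxC hnC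
  -- step 2 : pointwise ae bound
  have step2 : (∫ t in (0:ℝ)..1, ‖(t:ℂ) ^ (z-1) * (1-(t:ℂ)) ^ (c-1)‖) ≤
      ∫ t in (0:ℝ)..1, ‖(t:ℂ) ^ ((x:ℂ)-1) * (1-(t:ℂ)) ^ (((m:ℂ)+1)-1)‖ := by
    refine intervalIntegral.integral_mono_ae_restrict zero_le_one Izc.norm Ixn.norm ?_
    filter_upwards [ae_Ioo_restrict_Icc] with t ht
    have ht0 : (0:ℝ) < t := ht.1
    have ht1 : (0:ℝ) < 1 - t := by linarith [ht.2]
    have e1 : ‖(t:ℂ) ^ (z-1)‖ = t ^ (x - 1) := by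
      rw [Complex.norm_cpow_eq_rpow_re_of_pos ht0]
      norm_num
      rfl
    have e2 : ‖(t:ℂ) ^ ((x:ℂ)-1)‖ = t ^ (x - 1) := by
      rw [Complex.norm_cpow_eq_rpow_re_of_pos ht0]
      norm_num
    have e3 : ‖(1-(t:ℂ)) ^ (c-1)‖ = (1-t) ^ (c.re - 1) := by
      rw [show (1-(t:ℂ)) = ((1-t:ℝ):ℂ) by push_cast; ring,
        Complex.norm_cpow_eq_rpow_re_of_pos ht1]
      norm_num
    have e4 : ‖(1-(t:ℂ)) ^ (((m:ℂ)+1)-1)‖ = (1-t) ^ ((m:ℝ)) := by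
      rw [show (1-(t:ℂ)) = ((1-t:ℝ):ℂ) by push_cast; ring,
        Complex.norm_cpow_eq_rpow_re_of_pos ht1]
      norm_num
    rw [norm_mul, norm_mul, e1, e2, e3, e4]
    refine mul_le_mul_of_nonneg_left ?_ (by positivity)
    exact Real.rpow_le_rpow_of_exponent_ge ht1 (by linarith [ht.2]) (by linarith)
  -- step 3 : evaluate the real beta integral
  have step3 : ((∫ t in (0:ℝ)..1, ‖(t:ℂ) ^ ((x:ℂ)-1) * (1-(t:ℂ)) ^ (((m:ℂ)+1)-1)‖ : ℝ) : ℂ)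
      = Complex.betaIntegral (x:ℂ) ((m:ℂ)+1) := by
    rw [Complex.betaIntegral]
    rw [← intervalIntegral.integral_ofReal]
    refine intervalIntegral.integral_congr_ae ?_
    rw [Set.uIoc_of_le (zero_le_one' ℝ)]
    have h2 : ∀ᵐ (t:ℝ), t ≠ 1 := by
      rw [Filter.eventually_iff, mem_ae_iff]
      simpa using measure_singleton (1:ℝ)
    filter_upwards [h2] with t hne ht
    have ht0 : (0:ℝ) < t := ht.1
    have ht1 : (0:ℝ) < 1 - t := by
      rcases lt_of_le_of_ne ht.2 hne with h
      linarith
    have e2 : ‖(t:ℂ) ^ ((x:ℂ)-1)‖ = t ^ (x - 1) := by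
      rw [Complex.norm_cpow_eq_rpow_re_of_pos ht0]
      norm_num
    have e4 : ‖(1-(t:ℂ)) ^ (((m:ℂ)+1)-1)‖ = (1-t) ^ ((m:ℝ)) := by
      rw [show (1-(t:ℂ)) = ((1-t:ℝ):ℂ) by push_cast; ring,
        Complex.norm_cpow_eq_rpow_re_of_pos ht1]
      norm_num
    have f2 : ((t:ℂ)) ^ ((x:ℂ)-1) = ((t ^ (x-1) : ℝ) : ℂ) := by
      rw [Complex.ofReal_cpow ht0.le]
      push_cast
      ring_nf
    have f4 : (1-(t:ℂ)) ^ (((m:ℂ)+1)-1) = (((1-t) ^ ((m:ℝ)) : ℝ) : ℂ) := by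
      rw [show (1-(t:ℂ)) = ((1-t:ℝ):ℂ) by push_cast; ring, Complex.ofReal_cpow ht1.le]
      push_cast
      ring_nf
    rw [norm_mul, e2, e4, f2, f4]
    push_cast
    ring
  -- step 1
  have step1 : ‖Complex.betaIntegral z c‖ ≤
      ∫ t in (0:ℝ)..1, ‖(t:ℂ) ^ (z-1) * (1-(t:ℂ)) ^ (c-1)‖ := by
    rw [Complex.betaIntegral]
    exact intervalIntegral.norm_integral_le_integral_norm zero_le_one
  -- evaluate
  set J : ℝ := ∫ t in (0:ℝ)..1, ‖(t:ℂ) ^ ((x:ℂ)-1) * (1-(t:ℂ)) ^ (((m:ℂ)+1)-1)‖ with hJ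
  have step4 : Complex.betaIntegral (x:ℂ) ((m:ℂ)+1) =
      ((Nat.factorial m : ℕ) : ℂ) / ∏ j ∈ Finset.range (m+1), ((x:ℂ) + j) :=
    Complex.betaIntegral_eval_nat_add_one_right hxC m
  set P : ℝ := ∏ j ∈ Finset.range (m+1), (x + j) with hP
  have hPpos : 0 < P := Finset.prod_pos (fun j _ => by positivity)
  have hprod : (∏ j ∈ Finset.range (m+1), ((x:ℂ) + j)) = ((P : ℝ) : ℂ) := by
    rw [hP]
    push_cast
    ring
  have hJval : J = ((Nat.factorial m : ℕ) : ℝ) / P := by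
    have : ((J : ℝ) : ℂ) = ((((Nat.factorial m : ℕ) : ℝ) / P : ℝ) : ℂ) := by
      rw [step3, step4, hprod]
      push_cast
      ring
    exact_mod_cast this
  have hPge : x ^ (m+1) ≤ P := by
    rw [hP]
    calc x ^ (m+1) = ∏ _j ∈ Finset.range (m+1), x := by
          rw [Finset.prod_const, Finset.card_range]
      _ ≤ ∏ j ∈ Finset.range (m+1), (x + j) :=
          Finset.prod_le_prod (fun j _ => hz.le)
            (fun j _ => le_add_of_nonneg_right (Nat.cast_nonneg j))
  calc ‖Complex.betaIntegral z c‖ ≤ J := le_trans step1 step2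
    _ = ((Nat.factorial m : ℕ) : ℝ) / P := hJval
    _ ≤ ((Nat.factorial m : ℕ) : ℝ) / x ^ (m+1) := by
        exact div_le_div_of_nonneg_left (by positivity) (by positivity) hPge

lemma gamma_ratio {z c : ℂ} (hz : 0 < z.re) (m : ℕ) (hb : (m + 1 : ℝ) ≤ c.re) :
    ‖Complex.Gamma z‖ * ‖Complex.Gamma c‖ * z.re ^ (m+1)
      ≤ ‖Complex.Gamma (z + c)‖ * (Nat.factorial m : ℝ) := by
  have hc : 0 < c.re := lt_of_lt_of_le (by positivity) hb
  have h := Complex.Gamma_mul_Gamma_eq_betaIntegral hz hc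
  have habs : ‖Complex.Gamma z‖ * ‖Complex.Gamma c‖
      = ‖Complex.Gamma (z+c)‖ * ‖Complex.betaIntegral z c‖ := by
    rw [← norm_mul, ← norm_mul, h]
  rw [habs]
  have hB := beta_norm_le hz m hb
  have hB2 : ‖Complex.betaIntegral z c‖ * z.re ^ (m+1) ≤ (Nat.factorial m : ℝ) :=
    (le_div_iff₀ (by positivity)).mp hB
  calc ‖Complex.Gamma (z+c)‖ * ‖Complex.betaIntegral z c‖ * z.re ^ (m+1)
      = ‖Complex.Gamma (z+c)‖ * (‖Complex.betaIntegral z c‖ * z.re ^ (m+1)) := by ring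
    _ ≤ ‖Complex.Gamma (z+c)‖ * (Nat.factorial m : ℝ) :=
        mul_le_mul_of_nonneg_left hB2 (norm_nonneg _)

set_option maxHeartbeats 2000000 in
theorem stmt9 (r₁ r₂ : ℂ) (h₁ : 0 < r₁.re) (h₂ : 0 < r₂.re)
    (hind : LinearIndependent ℤ ![r₁, r₂]) (k : ℝ) (hk : 0 < k)
    (p i : ℕ) (hip : p < i) (sμ : ℂ) (hsμ : 0 ≤ sμ.re)
    (l₁ l₂ : ℕ) (hl : ((i : ℝ) - p) * k ≤ ((l₁ : ℂ) * r₁ + (l₂ : ℂ) * r₂).re) :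
    ∃ C > (0:ℝ), ∀ a : ℕ × ℕ → ℂ, a 0 = 0 →
      (Summable fun m : ℕ × ℕ =>
        ‖(m.1:ℂ)*r₁ + (m.2:ℂ)*r₂‖ ^ p * ‖a m‖ /
          ‖Complex.Gamma (((m.1:ℂ)*r₁ + (m.2:ℂ)*r₂) / k)‖) →
      -- the image z₁^{l₁} z₂^{l₂} (Δ + sμ)^i η lies in H⁰ …
      (Summable fun m : ℕ × ℕ =>
        ‖if l₁ ≤ m.1 ∧ l₂ ≤ m.2 then
            ((((m.1 - l₁ : ℕ):ℂ)*r₁ + ((m.2 - l₂ : ℕ):ℂ)*r₂) + sμ) ^ i *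
              a (m.1 - l₁, m.2 - l₂)
          else 0‖ /
          ‖Complex.Gamma (((m.1:ℂ)*r₁ + (m.2:ℂ)*r₂) / k)‖) ∧
      -- … and the operator is bounded from Hᵖ to H⁰
      (∑' m : ℕ × ℕ,
        ‖if l₁ ≤ m.1 ∧ l₂ ≤ m.2 then
            ((((m.1 - l₁ : ℕ):ℂ)*r₁ + ((m.2 - l₂ : ℕ):ℂ)*r₂) + sμ) ^ i *
              a (m.1 - l₁, m.2 - l₂)
          else 0‖ /
          ‖Complex.Gamma (((m.1:ℂ)*r₁ + (m.2:ℂ)*r₂) / k)‖)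
      ≤ C * ∑' m : ℕ × ℕ,
          ‖(m.1:ℂ)*r₁ + (m.2:ℂ)*r₂‖ ^ p * ‖a m‖ /
            ‖Complex.Gamma (((m.1:ℂ)*r₁ + (m.2:ℂ)*r₂) / k)‖ := by
  set L : ℂ := (l₁:ℂ) * r₁ + (l₂:ℂ) * r₂ with hLdef
  obtain ⟨n, hn⟩ : ∃ n : ℕ, i = p + (n+1) := ⟨i - p - 1, by omega⟩
  have hLre : ((n:ℝ) + 1) * k ≤ L.re := by
    have h' : ((i:ℝ) - p) = (n:ℝ) + 1 := by rw [hn]; push_cast; ring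
    rw [← h']; exact hl
  have hLpos : 0 < L.re := lt_of_lt_of_le (by positivity) hLre
  set ρ : ℝ := min r₁.re r₂.re with hρdef
  have hρ : 0 < ρ := lt_min h₁ h₂
  set R : ℝ := max (‖r₁‖) (‖r₂‖) with hRdef
  have hR : 0 < R := lt_max_of_lt_left (norm_pos_iff.mpr (fun h => by rw [h] at h₁; simp at h₁))
  set c : ℂ := L / k with hcdef
  have hcre : ((n:ℝ) + 1) ≤ c.re := by
    rw [hcdef, Complex.div_ofReal_re, le_div_iff₀ hk]; exact hLre
  have hcpos : 0 < c.re := lt_of_lt_of_le (by positivity) hcre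
  have hΓc : 0 < ‖Complex.Gamma c‖ :=
    norm_pos_iff.mpr (Complex.Gamma_ne_zero_of_re_pos hcpos)
  have hfacpos : (0:ℝ) < (Nat.factorial n : ℝ) := by
    exact_mod_cast Nat.factorial_pos n
  set C : ℝ := (1 + ‖sμ‖ / ρ)^i * (R * k / ρ)^(n+1) * (Nat.factorial n : ℝ)
      / ‖Complex.Gamma c‖ with hCdef
  have hC : 0 < C := by
    apply div_pos _ hΓc
    have h1 : (0:ℝ) < (1 + ‖sμ‖ / ρ) := by positivity
    positivity
  refine ⟨C, hC, ?_⟩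
  intro a ha0 hF
  set γ : ℕ × ℕ → ℂ := fun m => (m.1:ℂ) * r₁ + (m.2:ℂ) * r₂ with hγdef
  have hγre_eq : ∀ m : ℕ × ℕ, (γ m).re = m.1 * r₁.re + m.2 * r₂.re := by
    intro m
    simp [hγdef, Complex.add_re, Complex.mul_re]
  have hγre : ∀ m : ℕ × ℕ, ρ * (m.1 + m.2) ≤ (γ m).re := by
    intro m
    rw [hγre_eq]
    have a1 : ρ * m.1 ≤ m.1 * r₁.re := by
      have := min_le_left r₁.re r₂.re
      rw [← hρdef] at this
      nlinarith [Nat.cast_nonneg (α := ℝ) m.1]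
    have a2 : ρ * m.2 ≤ m.2 * r₂.re := by
      have := min_le_right r₁.re r₂.re
      rw [← hρdef] at this
      nlinarith [Nat.cast_nonneg (α := ℝ) m.2]
    nlinarith
  have hγre_nonneg : ∀ m : ℕ × ℕ, 0 ≤ (γ m).re := by
    intro m
    have := hγre m
    nlinarith [Nat.cast_nonneg (α := ℝ) m.1, Nat.cast_nonneg (α := ℝ) m.2]
  have hγabs : ∀ m : ℕ × ℕ, ‖γ m‖ ≤ R * (m.1 + m.2) := by
    intro m
    calc ‖γ m‖ ≤ ‖(m.1:ℂ) * r₁‖ + ‖(m.2:ℂ) * r₂‖ :=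
          norm_add_le _ _
      _ = m.1 * ‖r₁‖ + m.2 * ‖r₂‖ := by
          rw [norm_mul, norm_mul, Complex.norm_natCast, Complex.norm_natCast]
      _ ≤ m.1 * R + m.2 * R := by
          have := le_max_left (‖r₁‖) (‖r₂‖)
          have := le_max_right (‖r₁‖) (‖r₂‖)
          rw [← hRdef] at *
          gcongr
      _ = R * (m.1 + m.2) := by ring
  -- key pointwise estimate
  have key : ∀ m : ℕ × ℕ, m ≠ 0 →
      ‖γ m + sμ‖ ^ i * ‖Complex.Gamma (γ m / k)‖
        ≤ C * (‖γ m‖ ^ p * ‖Complex.Gamma ((γ m + L) / k)‖) := by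
    intro m hm
    have hone : (1:ℝ) ≤ (m.1:ℝ) + m.2 := by
      have h' : 1 ≤ m.1 + m.2 := by
        rcases m with ⟨m1, m2⟩
        have : ¬(m1 = 0 ∧ m2 = 0) := fun h => hm (by simp [Prod.ext_iff, h.1, h.2])
        omega
      exact_mod_cast h'
    have h0 : (0:ℝ) < ρ * ((m.1:ℝ) + m.2) := by nlinarith
    have hx : 0 < (γ m).re := lt_of_lt_of_le h0 (hγre m)
    have hρ1 : ρ ≤ ρ * ((m.1:ℝ) + m.2) := by nlinarith
    have hρx : ρ ≤ (γ m).re := le_trans hρ1 (hγre m)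
    have hz : 0 < ((γ m) / k).re := by
      rw [Complex.div_ofReal_re]
      positivity
    have hgr := gamma_ratio hz n hcre
    rw [Complex.div_ofReal_re] at hgr
    have hzc : γ m / ↑k + c = (γ m + L) / ↑k := by
      rw [hcdef, ← add_div]
    rw [hzc] at hgr
    -- bound on Gamma at γ m / k
    have hΓden : 0 < ‖Complex.Gamma ((γ m + L)/k)‖ := by
      apply norm_pos_iff.mpr
      apply Complex.Gamma_ne_zero_of_re_pos
      rw [Complex.div_ofReal_re, Complex.add_re]
      have := hγre_nonneg m
      positivity
    have hΓest : ‖Complex.Gamma (γ m / k)‖ ≤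
        ‖Complex.Gamma ((γ m + L)/k)‖ * (Nat.factorial n : ℝ)
          / (‖Complex.Gamma c‖ * ((γ m).re / k) ^ (n+1)) := by
      rw [le_div_iff₀ (by positivity)]
      calc ‖Complex.Gamma (γ m / k)‖ *
            (‖Complex.Gamma c‖ * ((γ m).re / k) ^ (n+1))
          = ‖Complex.Gamma (γ m / k)‖ * ‖Complex.Gamma c‖ *
            ((γ m).re / k) ^ (n+1) := by ring
        _ ≤ _ := hgr
    -- bound on |γ m + sμ|^i
    have hρabs : ρ ≤ ‖γ m‖ := le_trans hρx (Complex.re_le_norm _)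
    have hA1 : ‖γ m + sμ‖ ≤ (1 + ‖sμ‖ / ρ) * ‖γ m‖ := by
      calc ‖γ m + sμ‖ ≤ ‖γ m‖ + ‖sμ‖ :=
            norm_add_le _ _
        _ ≤ ‖γ m‖ + (‖sμ‖ / ρ) * ‖γ m‖ := by
            have : ‖sμ‖ ≤ (‖sμ‖ / ρ) * ‖γ m‖ := by
              rw [div_mul_eq_mul_div, le_div_iff₀ hρ]
              nlinarith [norm_nonneg sμ]
            linarith
        _ = (1 + ‖sμ‖ / ρ) * ‖γ m‖ := by ring
    have hA : ‖γ m + sμ‖ ^ i ≤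
        (1 + ‖sμ‖ / ρ)^i * ‖γ m‖ ^ p * ‖γ m‖ ^ (n+1) := by
      calc ‖γ m + sμ‖ ^ i ≤ ((1 + ‖sμ‖ / ρ) * ‖γ m‖) ^ i :=
            pow_le_pow_left₀ (norm_nonneg _) hA1 i
        _ = (1 + ‖sμ‖ / ρ)^i * ‖γ m‖ ^ p * ‖γ m‖ ^ (n+1) := by
            rw [mul_pow, hn, pow_add]
            ring
    have hg2 : ‖γ m‖ ^ (n+1) ≤ (R * k / ρ)^(n+1) * ((γ m).re / k) ^ (n+1) := by
      rw [← mul_pow]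
      apply pow_le_pow_left₀ (norm_nonneg _)
      calc ‖γ m‖ ≤ R * (m.1 + m.2) := hγabs m
        _ ≤ (R / ρ) * (γ m).re := by
            rw [div_mul_eq_mul_div, le_div_iff₀ hρ]
            calc R * ((m.1:ℝ) + m.2) * ρ = R * (ρ * (m.1 + m.2)) := by ring
              _ ≤ R * (γ m).re := by
                  have := hγre m
                  nlinarith
        _ = R * k / ρ * ((γ m).re / k) := by
            field_simp
    -- combine
    calc ‖γ m + sμ‖ ^ i * ‖Complex.Gamma (γ m / k)‖
        ≤ ((1 + ‖sμ‖ / ρ)^i * ‖γ m‖ ^ p *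
            ((R * k / ρ)^(n+1) * ((γ m).re / k) ^ (n+1))) *
          (‖Complex.Gamma ((γ m + L)/k)‖ * (Nat.factorial n : ℝ)
            / (‖Complex.Gamma c‖ * ((γ m).re / k) ^ (n+1))) := by
          have h1ρ : (0:ℝ) < 1 + ‖sμ‖ / ρ :=
            add_pos_of_pos_of_nonneg one_pos (div_nonneg (norm_nonneg _) hρ.le)
          refine mul_le_mul ?_ hΓest (norm_nonneg _) (by positivity)
          refine le_trans hA ?_
          have hnn : 0 ≤ (1 + ‖sμ‖ / ρ)^i * ‖γ m‖ ^ p := by positivity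
          calc (1 + ‖sμ‖ / ρ)^i * ‖γ m‖ ^ p * ‖γ m‖ ^ (n+1)
              = ((1 + ‖sμ‖ / ρ)^i * ‖γ m‖ ^ p) *
                ‖γ m‖ ^ (n+1) := by ring
            _ ≤ ((1 + ‖sμ‖ / ρ)^i * ‖γ m‖ ^ p) *
                ((R * k / ρ)^(n+1) * ((γ m).re / k) ^ (n+1)) :=
                mul_le_mul_of_nonneg_left hg2 hnn
            _ = (1 + ‖sμ‖ / ρ)^i * ‖γ m‖ ^ p *
                ((R * k / ρ)^(n+1) * ((γ m).re / k) ^ (n+1)) := by ring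
      _ = C * (‖γ m‖ ^ p * ‖Complex.Gamma ((γ m + L) / k)‖) := by
          rw [hCdef]
          have hne1 : ((γ m).re / k) ^ (n+1) ≠ 0 := by positivity
          have hne2 : ‖Complex.Gamma c‖ ≠ 0 := ne_of_gt hΓc
          field_simp
  clear hl hLre
  classical
  have hFnonneg : ∀ m : ℕ × ℕ, 0 ≤ ‖γ m‖ ^ p * ‖a m‖ /
      ‖Complex.Gamma (γ m / k)‖ := fun m =>
    div_nonneg (mul_nonneg (pow_nonneg (norm_nonneg _) _) (norm_nonneg _))
      (norm_nonneg _)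
  have hγadd : ∀ m : ℕ × ℕ, l₁ ≤ m.1 → l₂ ≤ m.2 →
      γ m = γ (m.1 - l₁, m.2 - l₂) + L := by
    intro m hm1 hm2
    simp only [hγdef, hLdef]
    push_cast [Nat.cast_sub hm1, Nat.cast_sub hm2]
    ring
  have hΓpos : ∀ w : ℂ, 0 < w.re → 0 < ‖Complex.Gamma (w / k)‖ := by
    intro w hw
    apply norm_pos_iff.mpr
    apply Complex.Gamma_ne_zero_of_re_pos
    rw [Complex.div_ofReal_re]
    positivity
  set G : ℕ × ℕ → ℝ := fun m =>
    ‖if l₁ ≤ m.1 ∧ l₂ ≤ m.2 then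
        ((((m.1 - l₁ : ℕ):ℂ)*r₁ + ((m.2 - l₂ : ℕ):ℂ)*r₂) + sμ) ^ i *
          a (m.1 - l₁, m.2 - l₂)
      else 0‖ /
      ‖Complex.Gamma (((m.1:ℂ)*r₁ + (m.2:ℂ)*r₂) / k)‖ with hGdef
  set H : ℕ × ℕ → ℝ := fun m => if l₁ ≤ m.1 ∧ l₂ ≤ m.2 then
      C * (‖γ (m.1 - l₁, m.2 - l₂)‖ ^ p * ‖a (m.1 - l₁, m.2 - l₂)‖ /
        ‖Complex.Gamma (γ (m.1 - l₁, m.2 - l₂) / k)‖) else 0 with hHdef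
  set e : ℕ × ℕ → ℕ × ℕ := fun m => (m.1 + l₁, m.2 + l₂) with hedef
  have he : Function.Injective e := by
    intro u v huv
    simp only [hedef, Prod.ext_iff] at huv ⊢
    omega
  have hrange : ∀ m : ℕ × ℕ, m ∉ Set.range e → H m = 0 := by
    intro m hm
    rw [hHdef]
    simp only
    rw [if_neg]
    intro hcond
    refine hm ⟨(m.1 - l₁, m.2 - l₂), ?_⟩
    simp only [hedef]
    exact Prod.ext_iff.mpr ⟨by simp [Nat.sub_add_cancel hcond.1],
      by simp [Nat.sub_add_cancel hcond.2]⟩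
  have hHe : ∀ m : ℕ × ℕ, H (e m) = C * (‖γ m‖ ^ p * ‖a m‖ /
      ‖Complex.Gamma (γ m / k)‖) := by
    intro m
    rw [hHdef, hedef]
    simp only
    rw [if_pos ⟨Nat.le_add_left l₁ m.1, Nat.le_add_left l₂ m.2⟩]
    simp [Nat.add_sub_cancel]
  have hGnonneg : ∀ m : ℕ × ℕ, 0 ≤ G m := fun m =>
    div_nonneg (norm_nonneg _) (norm_nonneg _)
  have hHnonneg : ∀ m : ℕ × ℕ, 0 ≤ H m := by
    intro m
    rw [hHdef]
    simp only
    split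
    · exact mul_nonneg hC.le (hFnonneg _)
    · exact le_refl 0
  have hGH : ∀ m : ℕ × ℕ, G m ≤ H m := by
    intro m
    rw [hGdef, hHdef]
    simp only
    by_cases hcond : l₁ ≤ m.1 ∧ l₂ ≤ m.2
    · rw [if_pos hcond, if_pos hcond]
      have hmm : ((((m.1 - l₁ : ℕ):ℂ)*r₁ + ((m.2 - l₂ : ℕ):ℂ)*r₂) + sμ)
          = γ (m.1 - l₁, m.2 - l₂) + sμ := by
        simp only [hγdef]
      rw [hmm]
      by_cases hz' : ((m.1 - l₁, m.2 - l₂) : ℕ × ℕ) = 0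
      · have ha' : a (m.1 - l₁, m.2 - l₂) = 0 := by rw [hz']; exact ha0
        rw [ha', mul_zero, norm_zero, zero_div]
        exact mul_nonneg hC.le (div_nonneg
          (mul_nonneg (pow_nonneg (norm_nonneg _) _) le_rfl) (norm_nonneg _))
      · have hkey := key (m.1 - l₁, m.2 - l₂) hz'
        rw [← hγadd m hcond.1 hcond.2] at hkey
        have hre' : 0 < (γ (m.1 - l₁, m.2 - l₂)).re := by
          have hone : (1:ℝ) ≤ ((m.1 - l₁ : ℕ):ℝ) + ((m.2 - l₂ : ℕ):ℝ) := by
            have h' : 1 ≤ (m.1 - l₁) + (m.2 - l₂) := by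
              have : ¬(m.1 - l₁ = 0 ∧ m.2 - l₂ = 0) :=
                fun h => hz' (by simp [Prod.ext_iff, h.1, h.2])
              omega
            exact_mod_cast h'
          refine lt_of_lt_of_le ?_ (hγre (m.1 - l₁, m.2 - l₂))
          have h0 : (0:ℝ) < ρ * (((m.1 - l₁ : ℕ):ℝ) + ((m.2 - l₂ : ℕ):ℝ)) := by nlinarith
          exact h0
        have hrem : 0 < (γ m).re := by
          rw [hγadd m hcond.1 hcond.2, Complex.add_re]
          have := hγre_nonneg (m.1 - l₁, m.2 - l₂)
          linarith
        have hD : 0 < ‖Complex.Gamma ((γ m) / k)‖ := hΓpos (γ m) hrem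
        have hD' : 0 < ‖Complex.Gamma (γ (m.1 - l₁, m.2 - l₂) / k)‖ :=
          hΓpos _ hre'
        have hγm : ((m.1:ℂ)*r₁ + (m.2:ℂ)*r₂) = γ m := by simp only [hγdef]
        rw [hγm]
        rw [norm_mul, norm_pow]
        have hdiv : ‖γ (m.1 - l₁, m.2 - l₂) + sμ‖ ^ i /
            ‖Complex.Gamma (γ m / k)‖ ≤
            C * ‖γ (m.1 - l₁, m.2 - l₂)‖ ^ p /
            ‖Complex.Gamma (γ (m.1 - l₁, m.2 - l₂) / k)‖ := by
          rw [div_le_div_iff₀ hD hD']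
          exact le_of_le_of_eq hkey (by ring)
        have hmul := mul_le_mul_of_nonneg_right hdiv
          (norm_nonneg (a (m.1 - l₁, m.2 - l₂)))
        calc ‖γ (m.1 - l₁, m.2 - l₂) + sμ‖ ^ i *
              ‖a (m.1 - l₁, m.2 - l₂)‖ /
              ‖Complex.Gamma (γ m / k)‖
            = ‖γ (m.1 - l₁, m.2 - l₂) + sμ‖ ^ i /
              ‖Complex.Gamma (γ m / k)‖ *
              ‖a (m.1 - l₁, m.2 - l₂)‖ := by ring
          _ ≤ C * ‖γ (m.1 - l₁, m.2 - l₂)‖ ^ p /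
              ‖Complex.Gamma (γ (m.1 - l₁, m.2 - l₂) / k)‖ *
              ‖a (m.1 - l₁, m.2 - l₂)‖ := hmul
          _ = C * (‖γ (m.1 - l₁, m.2 - l₂)‖ ^ p *
              ‖a (m.1 - l₁, m.2 - l₂)‖ /
              ‖Complex.Gamma (γ (m.1 - l₁, m.2 - l₂) / k)‖) := by ring
    · rw [if_neg hcond, if_neg hcond, norm_zero, zero_div]
  have hHcomp : Summable (fun m : ℕ × ℕ => H (e m)) := by
    refine Summable.congr (hF.mul_left C) ?_
    intro m
    rw [hHe m]
  have hHsum : Summable H := (he.summable_iff hrange).mp hHcomp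
  have hGsum : Summable G := Summable.of_nonneg_of_le hGnonneg hGH hHsum
  have hsupp : Function.support H ⊆ Set.range e :=
    Function.support_subset_iff'.mpr hrange
  have htsum : ∑' m, G m ≤ C * ∑' m : ℕ × ℕ,
      ‖(m.1:ℂ)*r₁ + (m.2:ℂ)*r₂‖ ^ p * ‖a m‖ /
        ‖Complex.Gamma (((m.1:ℂ)*r₁ + (m.2:ℂ)*r₂) / k)‖ := by
    calc ∑' m, G m ≤ ∑' m, H m := Summable.tsum_le_tsum hGH hGsum hHsum
      _ = ∑' m, H (e m) := (he.tsum_eq hsupp).symm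
      _ = ∑' m, C * (‖γ m‖ ^ p * ‖a m‖ /
            ‖Complex.Gamma (γ m / k)‖) := by
          exact tsum_congr hHe
      _ = C * ∑' m : ℕ × ℕ, ‖γ m‖ ^ p * ‖a m‖ /
            ‖Complex.Gamma (γ m / k)‖ := tsum_mul_left
  exact ⟨hGsum, htsum⟩
end

section
/- Let $k > 0$ and let $\gamma'$ be a complex number with $\mathrm{Re}\,\gamma' \geq (i-p)k$ for integers $i > p \geq 0$. Then the sequence (net) $(\gamma - \gamma' + s_\mu)^{i-p}\, \Gamma((\gamma - \gamma')/k)/\Gamma(\gamma/k)$ is bounded uniformly over all $\gamma$ in a set of complex numbers with $\mathrm{Re}(\gamma - \gamma') \geq \epsilon > 0$, for any fixed $s_\mu \in \mathbb{C}$: i.e., there exists $C > 0$ such that $|(\gamma - \gamma' + s_\mu)^{i-p}|\cdot|\Gamma((\gamma-\gamma')/k)/\Gamma(\gamma/k)| \leq C$ for all such $\gamma$. -/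
set_option maxHeartbeats 1000000

open Finset Real Complex Filter

lemma aux_sum_inv_sq (n : ℕ) : ∑ j ∈ range n, (1:ℝ)/((j:ℝ)+1)^2 ≤ 2 := by
  have key : ∀ m : ℕ, ∑ j ∈ range (m+1), (1:ℝ)/((j:ℝ)+1)^2 ≤ 2 - 1/((m:ℝ)+1) := by
    intro m
    induction m with
    | zero => norm_num
    | succ m ih =>
      rw [Finset.sum_range_succ]
      have h1 : (0:ℝ) < (m:ℝ)+1 := by positivity
      have h2 : (0:ℝ) < (m:ℝ)+2 := by positivity
      have h3 : (1:ℝ)/((m:ℝ)+1+1)^2 ≤ 1/((m:ℝ)+1) - 1/((m:ℝ)+2) := by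
        rw [div_sub_div _ _ h1.ne' h2.ne', div_le_div_iff₀ (by positivity) (by positivity)]
        nlinarith [sq_nonneg ((m:ℝ)+1)]
      have e : ((m:ℕ):ℝ)+1+1 = (m:ℝ)+2 := by ring
      push_cast
      rw [e] at h3 ⊢
      push_cast at ih
      linarith
  cases n with
  | zero => simp
  | succ m =>
    refine (key m).trans ?_
    have : (0:ℝ) < 1/((m:ℝ)+1) := by positivity
    linarith

lemma aux_harmonic (m : ℕ) : ∑ j ∈ range (m+1), (1:ℝ)/((j:ℝ)+1) ≤ 1 + Real.log ((m:ℝ)+1) := by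
  induction m with
  | zero => simp
  | succ m ih =>
    rw [Finset.sum_range_succ]
    have h1 : (0:ℝ) < (m:ℝ)+1 := by positivity
    have h2 : (0:ℝ) < (m:ℝ)+2 := by positivity
    have hlog : 1/((m:ℝ)+2) ≤ Real.log ((m:ℝ)+2) - Real.log ((m:ℝ)+1) := by
      have hz : (0:ℝ) < ((m:ℝ)+1)/((m:ℝ)+2) := by positivity
      have h := Real.log_le_sub_one_of_pos hz
      rw [Real.log_div h1.ne' h2.ne'] at h
      have heq : ((m:ℝ)+1)/((m:ℝ)+2) - 1 = -(1/((m:ℝ)+2)) := by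
        field_simp
        norm_num
      rw [heq] at h
      linarith
    have e : ((m:ℕ):ℝ)+1+1 = (m:ℝ)+2 := by ring
    push_cast
    rw [e]
    push_cast at ih
    linarith

lemma aux_arctan_slope {c b : ℝ} (h0 : 0 ≤ c) (hcb : c < b) :
    (b - c)/(1+b^2) ≤ Real.arctan b - Real.arctan c := by
  obtain ⟨t, ht, hslope⟩ := exists_hasDerivAt_eq_slope Real.arctan (fun x => 1/(1+x^2)) hcb
    (Real.continuous_arctan.continuousOn) (fun x _ => Real.hasDerivAt_arctan x)
  have hbc : b - c ≠ 0 := by linarith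
  have hslope' : (1:ℝ)/(1+t^2) = (Real.arctan b - Real.arctan c) / (b - c) := hslope
  rw [eq_div_iff hbc] at hslope'
  have harc : Real.arctan b - Real.arctan c = (b-c) * (1/(1+t^2)) := by
    rw [← hslope']; ring
  rw [harc]
  have ht2 : t^2 ≤ b^2 := by nlinarith [ht.1, ht.2]
  have hb : (0:ℝ) < b - c := by linarith
  have h1 : (1:ℝ)/(1+b^2) ≤ 1/(1+t^2) := by
    apply one_div_le_one_div_of_le (by positivity)
    linarith
  calc (b-c)/(1+b^2) = (b-c) * (1/(1+b^2)) := by ring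
    _ ≤ (b-c) * (1/(1+t^2)) := by
        apply mul_le_mul_of_nonneg_left h1 hb.le

lemma aux_sumB (x y : ℝ) (hx : 1 ≤ x) (m : ℕ) :
    ∑ j ∈ range (m+1), |y|/((x+(j:ℝ))^2+y^2) ≤ 1/2 + π/2 := by
  rcases eq_or_ne y 0 with hy | hy
  · simp only [hy, abs_zero, zero_div, Finset.sum_const_zero]
    positivity
  · have hY : 0 < |y| := abs_pos.mpr hy
    have hyy : y^2 = |y|^2 := (_root_.sq_abs y).symm
    rw [Finset.sum_range_succ']
    have h0 : |y|/(x^2+y^2) ≤ 1/2 := by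
      rw [hyy, div_le_div_iff₀ (by positivity) (by norm_num)]
      nlinarith [sq_nonneg (x - |y|), hx, hY]
    have hterm : ∀ j : ℕ, |y|/((x+((j:ℝ)+1))^2+y^2) ≤
        Real.arctan ((x+((j:ℝ)+1))/|y|) - Real.arctan ((x+(j:ℝ))/|y|) := by
      intro j
      have hc0 : 0 ≤ (x+(j:ℝ))/|y| := by positivity
      have hcb : (x+(j:ℝ))/|y| < (x+((j:ℝ)+1))/|y| := by gcongr ?_/|y| <;> linarith
      have h := aux_arctan_slope hc0 hcb
      have heq : ((x+((j:ℝ)+1))/|y| - (x+(j:ℝ))/|y|)/(1+((x+((j:ℝ)+1))/|y|)^2)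
          = |y|/((x+((j:ℝ)+1))^2+y^2) := by
        field_simp; rw [← _root_.sq_abs y]; ring
      rw [heq] at h
      exact h
    have htel : ∑ j ∈ range m, |y|/((x+((j:ℝ)+1))^2+y^2) ≤ π/2 := by
      calc ∑ j ∈ range m, |y|/((x+((j:ℝ)+1))^2+y^2)
          ≤ ∑ j ∈ range m, (Real.arctan ((x+((j:ℝ)+1))/|y|) - Real.arctan ((x+(j:ℝ))/|y|)) :=
            Finset.sum_le_sum (fun j _ => hterm j)
        _ = Real.arctan ((x+(m:ℝ))/|y|) - Real.arctan ((x+((0:ℕ):ℝ))/|y|) := by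
            have := Finset.sum_range_sub (fun j : ℕ => Real.arctan ((x+(j:ℝ))/|y|)) m
            simp only [Nat.cast_add, Nat.cast_one] at this ⊢
            push_cast
            push_cast at this
            exact this
        _ ≤ π/2 := by
            have h1 := Real.arctan_lt_pi_div_two ((x+(m:ℝ))/|y|)
            have h2 : 0 ≤ Real.arctan ((x+((0:ℕ):ℝ))/|y|) := by
              rw [← Real.arctan_zero]
              exact Real.arctan_strictMono.monotone (by positivity)
            linarith
    push_cast
    simp only [add_zero]
    linarith [htel]

lemma aux_abs_one_add (v : ℂ) :
    ‖1 + v‖ ≤ Real.exp (v.re + (‖v‖)^2/2) := by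
  have h1 : (‖1+v‖)^2 = 1 + 2*v.re + (‖v‖)^2 := by
    rw [Complex.sq_norm, Complex.sq_norm, Complex.normSq_add]
    simp [Complex.normSq_one]
    ring
  have h2 : (‖1+v‖)^2 ≤ Real.exp (2*v.re + (‖v‖)^2) := by
    rw [h1]
    have := Real.add_one_le_exp (2*v.re + (‖v‖)^2)
    linarith
  have h3 : Real.exp (2*v.re + (‖v‖)^2) = (Real.exp (v.re + (‖v‖)^2/2))^2 := by
    rw [← Real.exp_nat_mul]
    norm_num
    ring_nf
  rw [h3] at h2
  exact (pow_le_pow_iff_left₀ (norm_nonneg _) (Real.exp_pos _).le two_ne_zero).mp h2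

lemma aux_Gamma_add_nat (z : ℂ) (hz : 0 < z.re) (n : ℕ) :
    Complex.Gamma (z + n) = (∏ j ∈ range n, (z + j)) * Complex.Gamma z := by
  induction n with
  | zero => simp
  | succ n ih =>
    have hre : 0 < (z + (n:ℂ)).re := by
      rw [Complex.add_re, Complex.natCast_re]
      have : (0:ℝ) ≤ (n:ℝ) := n.cast_nonneg
      linarith
    have hne : z + (n:ℂ) ≠ 0 := by
      intro h; rw [h] at hre; simp at hre
    have : z + ((n+1 : ℕ):ℂ) = (z + n) + 1 := by push_cast; ring
    rw [this, Complex.Gamma_add_one _ hne, ih, Finset.prod_range_succ]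
    ring

lemma aux_ratio_bound (a : ℂ) (ha : 0 ≤ a.re) (ζ : ℂ) (hζ : 1 ≤ ζ.re)
    (m : ℕ) (hm : 1 ≤ m) :
    ‖Complex.GammaSeq ζ m / Complex.GammaSeq (ζ+a) m‖ ≤
      Real.exp (a.re*(1+Real.log 2) + |a.im| *(1/2+π/2) + (‖a‖)^2) := by
  have hζ0 : 0 < ζ.re := by linarith
  have hm0 : (0:ℝ) < (m:ℝ) := by exact_mod_cast hm
  have hmC : (m:ℂ) ≠ 0 := by exact_mod_cast hm0.ne'
  have hzj : ∀ j : ℕ, ζ + (j:ℂ) ≠ 0 := by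
    intro j h
    have : (ζ + (j:ℂ)).re = 0 := by rw [h]; simp
    rw [Complex.add_re, Complex.natCast_re] at this
    have : (0:ℝ) ≤ (j:ℝ) := j.cast_nonneg
    linarith [(show (ζ + (j:ℂ)).re = ζ.re + (j:ℝ) from by rw [Complex.add_re, Complex.natCast_re]) ▸ ‹(ζ + (j:ℂ)).re = 0›]
  -- key identity
  have hid : Complex.GammaSeq ζ m / Complex.GammaSeq (ζ+a) m
      = (m:ℂ)^(-a) * ∏ j ∈ range (m+1), ((ζ+a+j)/(ζ+j)) := by
    rw [Complex.GammaSeq, Complex.GammaSeq, Finset.prod_div_distrib]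
    have hpow : (m:ℂ)^(ζ+a) = (m:ℂ)^ζ * (m:ℂ)^a := Complex.cpow_add _ _ hmC
    have hpn : (m:ℂ)^(-a) = ((m:ℂ)^a)⁻¹ := Complex.cpow_neg _ _
    have hfac : (Nat.factorial m : ℂ) ≠ 0 := by exact_mod_cast (Nat.factorial_pos m).ne'
    have hP : ∏ j ∈ range (m+1), (ζ + (j:ℂ)) ≠ 0 :=
      Finset.prod_ne_zero_iff.mpr (fun j _ => hzj j)
    have hQ : ∏ j ∈ range (m+1), (ζ + a + (j:ℂ)) ≠ 0 := by
      refine Finset.prod_ne_zero_iff.mpr (fun j _ => ?_)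
      intro h
      have h2 : (ζ + a + (j:ℂ)).re = 0 := by rw [h]; simp
      rw [Complex.add_re, Complex.add_re, Complex.natCast_re] at h2
      have : (0:ℝ) ≤ (j:ℝ) := j.cast_nonneg
      linarith
    have hpa : (m:ℂ)^a ≠ 0 := by
      rw [Complex.cpow_def_of_ne_zero hmC]; exact Complex.exp_ne_zero _
    have hpz : (m:ℂ)^ζ ≠ 0 := by
      rw [Complex.cpow_def_of_ne_zero hmC]; exact Complex.exp_ne_zero _
    rw [hpn, hpow]
    field_simp
  rw [hid]
  rw [norm_mul, norm_prod]
  -- abs of cpow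
  have habs_pow : ‖(m:ℂ)^(-a)‖ = (m:ℝ) ^ (-a.re) := by
    rw [show ((m:ℕ):ℂ) = (((m:ℕ):ℝ):ℂ) from by push_cast; rfl]
    rw [Complex.norm_cpow_eq_rpow_re_of_pos hm0]
    simp
  rw [habs_pow]
  set x := ζ.re
  set y := ζ.im
  -- factor bound
  have hfact : ∀ j ∈ range (m+1), ‖(ζ+a+(j:ℂ))/(ζ+(j:ℂ))‖ ≤
      Real.exp (a.re * (1/((j:ℝ)+1)) + |a.im| * (|y|/((x+(j:ℝ))^2+y^2))
        + (‖a‖)^2/2 * (1/((j:ℝ)+1)^2)) := by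
    intro j _
    have hNj : Complex.normSq (ζ+(j:ℂ)) = (x+(j:ℝ))^2+y^2 := by
      rw [Complex.normSq_apply, Complex.add_re, Complex.add_im, Complex.natCast_re,
        Complex.natCast_im]
      ring
    have hNpos : 0 < (x+(j:ℝ))^2+y^2 := by
      have : (0:ℝ) ≤ (j:ℝ) := j.cast_nonneg
      have hxj : (1:ℝ) ≤ x + j := by linarith
      nlinarith
    have heq : (ζ+a+(j:ℂ))/(ζ+(j:ℂ)) = 1 + a/(ζ+(j:ℂ)) := by
      field_simp [hzj j]
      ring
    rw [heq]
    refine (aux_abs_one_add _).trans ?_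
    apply Real.exp_le_exp.mpr
    have hre : (a/(ζ+(j:ℂ))).re = (a.re*(x+(j:ℝ)) + a.im*y)/((x+(j:ℝ))^2+y^2) := by
      rw [Complex.div_re, hNj, Complex.add_re, Complex.add_im, Complex.natCast_re,
        Complex.natCast_im]
      ring
    have habs2 : (‖a/(ζ+(j:ℂ))‖)^2 = (‖a‖)^2/((x+(j:ℝ))^2+y^2) := by
      rw [norm_div, div_pow, Complex.sq_norm (ζ+(j:ℂ)), hNj]
    rw [hre, habs2]
    have hxj : (1:ℝ) ≤ x + (j:ℝ) := by
      have : (0:ℝ) ≤ (j:ℝ) := j.cast_nonneg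
      linarith
    have hj1 : ((j:ℝ)+1) ≤ x + (j:ℝ) := by linarith
    have hj1pos : (0:ℝ) < (j:ℝ)+1 := by positivity
    have hsq : ((j:ℝ)+1)^2 ≤ (x+(j:ℝ))^2 := by nlinarith
    have hsqN : ((j:ℝ)+1)^2 ≤ (x+(j:ℝ))^2+y^2 := by nlinarith [sq_nonneg y]
    have h1 : a.re*(x+(j:ℝ))/((x+(j:ℝ))^2+y^2) ≤ a.re * (1/((j:ℝ)+1)) := by
      rw [mul_one_div, div_le_div_iff₀ hNpos hj1pos]
      have : (x+(j:ℝ))*((j:ℝ)+1) ≤ (x+(j:ℝ))^2+y^2 := by nlinarith [sq_nonneg y]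
      nlinarith [ha]
    have h2 : a.im*y/((x+(j:ℝ))^2+y^2) ≤ |a.im| * (|y|/((x+(j:ℝ))^2+y^2)) := by
      have habs : a.im * y ≤ |a.im| * |y| := by
        calc a.im*y ≤ |a.im*y| := le_abs_self _
          _ = |a.im| * |y| := abs_mul _ _
      rw [← mul_div_assoc]
      exact (div_le_div_iff_of_pos_right hNpos).mpr habs
    have h3 : (‖a‖)^2/((x+(j:ℝ))^2+y^2)/2 ≤ (‖a‖)^2/2 * (1/((j:ℝ)+1)^2) := by
      have hle : (2:ℝ)*(((j:ℝ)+1)^2) ≤ ((x+(j:ℝ))^2+y^2)*2 := by nlinarith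
      have h2pos : (0:ℝ) < 2*(((j:ℝ)+1)^2) := by positivity
      calc (‖a‖)^2/((x+(j:ℝ))^2+y^2)/2
          = (‖a‖)^2 * (1/(((x+(j:ℝ))^2+y^2)*2)) := by rw [div_div, mul_one_div]
        _ ≤ (‖a‖)^2 * (1/((2:ℝ)*(((j:ℝ)+1)^2))) :=
            mul_le_mul_of_nonneg_left (one_div_le_one_div_of_le h2pos hle) (by positivity)
        _ = (‖a‖)^2/2 * (1/((j:ℝ)+1)^2) := by
            rw [mul_one_div, div_mul_div_comm, mul_one]
    calc (a.re*(x+(j:ℝ)) + a.im*y)/((x+(j:ℝ))^2+y^2) + (‖a‖)^2/((x+(j:ℝ))^2+y^2)/2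
        = a.re*(x+(j:ℝ))/((x+(j:ℝ))^2+y^2) + a.im*y/((x+(j:ℝ))^2+y^2)
          + (‖a‖)^2/((x+(j:ℝ))^2+y^2)/2 := by ring
      _ ≤ _ := by linarith
  have hprod : ∏ j ∈ range (m+1), ‖(ζ+a+(j:ℂ))/(ζ+(j:ℂ))‖ ≤
      Real.exp (a.re*(1+Real.log ((m:ℝ)+1)) + |a.im| *(1/2+π/2) + (‖a‖)^2) := by
    calc ∏ j ∈ range (m+1), ‖(ζ+a+(j:ℂ))/(ζ+(j:ℂ))‖
        ≤ ∏ j ∈ range (m+1), Real.exp (a.re * (1/((j:ℝ)+1)) + |a.im| * (|y|/((x+(j:ℝ))^2+y^2))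
            + (‖a‖)^2/2 * (1/((j:ℝ)+1)^2)) :=
          Finset.prod_le_prod (fun j _ => (norm_nonneg _)) hfact
      _ = Real.exp (∑ j ∈ range (m+1), (a.re * (1/((j:ℝ)+1)) + |a.im| * (|y|/((x+(j:ℝ))^2+y^2))
            + (‖a‖)^2/2 * (1/((j:ℝ)+1)^2))) := (Real.exp_sum _ _).symm
      _ ≤ _ := by
          apply Real.exp_le_exp.mpr
          rw [Finset.sum_add_distrib, Finset.sum_add_distrib, ← Finset.mul_sum, ← Finset.mul_sum,
            ← Finset.mul_sum]
          have s1 := aux_harmonic m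
          have s2 := aux_sumB x y hζ m
          have s3 := aux_sum_inv_sq (m+1)
          have e1 : a.re * (∑ j ∈ range (m+1), 1/((j:ℝ)+1)) ≤ a.re*(1+Real.log ((m:ℝ)+1)) :=
            mul_le_mul_of_nonneg_left s1 ha
          have e2 : |a.im| * (∑ j ∈ range (m+1), |y|/((x+(j:ℝ))^2+y^2)) ≤ |a.im| *(1/2+π/2) :=
            mul_le_mul_of_nonneg_left s2 (abs_nonneg _)
          have e3 : (‖a‖)^2/2 * (∑ j ∈ range (m+1), 1/((j:ℝ)+1)^2) ≤
              (‖a‖)^2 := by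
            have := mul_le_mul_of_nonneg_left s3 (by positivity : (0:ℝ) ≤ (‖a‖)^2/2)
            linarith
          linarith
  calc (m:ℝ)^(-a.re) * ∏ j ∈ range (m+1), ‖(ζ+a+(j:ℂ))/(ζ+(j:ℂ))‖
      ≤ (m:ℝ)^(-a.re) * Real.exp (a.re*(1+Real.log ((m:ℝ)+1)) + |a.im| *(1/2+π/2)
          + (‖a‖)^2) := by
        apply mul_le_mul_of_nonneg_left hprod (Real.rpow_nonneg hm0.le _)
    _ ≤ _ := by
        rw [Real.rpow_def_of_pos hm0, ← Real.exp_add]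
        apply Real.exp_le_exp.mpr
        have hlog : Real.log ((m:ℝ)+1) ≤ Real.log 2 + Real.log (m:ℝ) := by
          rw [← Real.log_mul (by norm_num) hm0.ne']
          apply Real.log_le_log (by positivity)
          have h1m : (1:ℝ) ≤ (m:ℝ) := by exact_mod_cast hm
          linarith
        nlinarith [ha, Real.log_nonneg (by exact_mod_cast hm : (1:ℝ) ≤ (m:ℝ)), hlog]

lemma aux_core (a : ℂ) (ha : 0 ≤ a.re) :
    ∃ C > (0:ℝ), ∀ ζ : ℂ, 1 ≤ ζ.re →
      ‖Complex.Gamma ζ / Complex.Gamma (ζ + a)‖ ≤ C := by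
  refine ⟨Real.exp (a.re*(1+Real.log 2) + |a.im| * (1/2+π/2) + (‖a‖)^2),
    Real.exp_pos _, ?_⟩
  intro ζ hζ
  have hζa : 0 < (ζ+a).re := by rw [Complex.add_re]; linarith
  have hGa : Complex.Gamma (ζ+a) ≠ 0 := Complex.Gamma_ne_zero_of_re_pos hζa
  have htend : Tendsto (fun m => ‖Complex.GammaSeq ζ m / Complex.GammaSeq (ζ+a) m‖)
      atTop (nhds (‖Complex.Gamma ζ / Complex.Gamma (ζ+a)‖)) :=
    (continuous_norm.tendsto _).comp
      ((Complex.GammaSeq_tendsto_Gamma ζ).div (Complex.GammaSeq_tendsto_Gamma (ζ+a)) hGa)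
  refine le_of_tendsto htend ?_
  filter_upwards [eventually_ge_atTop 1] with m hm
  exact aux_ratio_bound a ha ζ hζ m hm

theorem stmt19 (k : ℝ) (hk : 0 < k) (p i : ℕ) (hip : p < i)
    (γ' : ℂ) (hγ' : ((i : ℝ) - p) * k ≤ γ'.re)
    (sμ : ℂ) (ε : ℝ) (hε : 0 < ε) :
    ∃ C > (0:ℝ), ∀ γ : ℂ, ε ≤ (γ - γ').re →
      ‖(γ - γ' + sμ) ^ (i - p)‖ *
        ‖Complex.Gamma ((γ - γ') / k) / Complex.Gamma (γ / k)‖ ≤ C := by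
  set n := i - p with hn
  have hn1 : 1 ≤ n := Nat.le_sub_of_add_le (by omega)
  have hkC : (k:ℂ) ≠ 0 := by exact_mod_cast hk.ne'
  set w : ℂ := γ' / k with hw
  have hwre : (n:ℝ) ≤ w.re := by
    rw [hw, Complex.div_ofReal_re, le_div_iff₀ hk]
    have : ((i:ℝ) - p) = (n:ℝ) := by
      rw [hn]
      push_cast [Nat.cast_sub hip.le]
      ring
    rw [← this]; exact hγ'
  set a : ℂ := w - (n:ℂ) with haa
  have ha : 0 ≤ a.re := by
    rw [haa, Complex.sub_re, Complex.natCast_re]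
    linarith
  obtain ⟨C₀, hC₀pos, hC₀⟩ := aux_core a ha
  set δ := ε / k with hδ
  have hδ0 : 0 < δ := div_pos hε hk
  set M := k + (k*(n:ℝ) + ‖sμ‖)/δ with hM
  have hMpos : 0 < M := by
    rw [hM]
    have : 0 ≤ (k*(n:ℝ) + ‖sμ‖)/δ := by positivity
    linarith
  refine ⟨M^n * C₀, by positivity, ?_⟩
  intro γ hγ
  set z : ℂ := (γ - γ')/k with hz
  have hzre : δ ≤ z.re := by
    rw [hz, Complex.div_ofReal_re, hδ]
    exact div_le_div_of_nonneg_right hγ hk.le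
  have hzre0 : 0 < z.re := lt_of_lt_of_le hδ0 hzre
  -- ζ := z + n
  have hζre : 1 ≤ (z + (n:ℂ)).re := by
    rw [Complex.add_re, Complex.natCast_re]
    have : (1:ℝ) ≤ (n:ℝ) := by exact_mod_cast hn1
    linarith
  have hcore := hC₀ (z + (n:ℂ)) hζre
  have hzwa : z + (n:ℂ) + a = γ/k := by
    rw [haa, hw, hz]
    field_simp
    ring
  rw [hzwa] at hcore
  -- Gamma z in terms of Gamma (z+n)
  have hzj : ∀ j : ℕ, z + (j:ℂ) ≠ 0 := by
    intro j h
    have h2 : (z + (j:ℂ)).re = 0 := by rw [h]; simp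
    rw [Complex.add_re, Complex.natCast_re] at h2
    have : (0:ℝ) ≤ (j:ℝ) := j.cast_nonneg
    linarith
  have hPne : ∏ j ∈ range n, (z + (j:ℂ)) ≠ 0 :=
    Finset.prod_ne_zero_iff.mpr (fun j _ => hzj j)
  have hGz : Complex.Gamma z = Complex.Gamma (z + (n:ℂ)) / ∏ j ∈ range n, (z + (j:ℂ)) := by
    rw [aux_Gamma_add_nat z hzre0 n, mul_comm, mul_div_assoc, div_self hPne, mul_one]
  have hX : γ - γ' = (k:ℂ) * z := by rw [hz]; field_simp
  have hδle : ∀ j : ℕ, δ ≤ ‖z + (j:ℂ)‖ := by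
    intro j
    have h1 : δ ≤ (z + (j:ℂ)).re := by
      rw [Complex.add_re, Complex.natCast_re]
      have : (0:ℝ) ≤ (j:ℝ) := j.cast_nonneg
      linarith
    exact h1.trans (Complex.re_le_norm _)
  have hfacb : ∀ j ∈ range n, ‖γ - γ' + sμ‖ ≤ M * ‖z + (j:ℂ)‖ := by
    intro j hj
    have hjn : (j:ℝ) ≤ (n:ℝ) := by
      exact_mod_cast (Finset.mem_range.mp hj).le
    have h1 : ‖γ - γ' + sμ‖ ≤ k * ‖z‖ + ‖sμ‖ := by
      rw [hX]
      refine (norm_add_le _ _).trans ?_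
      rw [norm_mul, Complex.norm_real, Real.norm_eq_abs, abs_of_pos hk]
    have h2 : ‖z‖ ≤ ‖z + (j:ℂ)‖ + (j:ℝ) := by
      have : z = (z + (j:ℂ)) + (-(j:ℂ)) := by ring
      calc ‖z‖ = ‖(z + (j:ℂ)) + (-(j:ℂ))‖ := by rw [← this]
        _ ≤ ‖z + (j:ℂ)‖ + ‖-(j:ℂ)‖ := norm_add_le _ _
        _ = ‖z + (j:ℂ)‖ + (j:ℝ) := by
            rw [norm_neg, Complex.norm_natCast]
    have h3 : δ ≤ ‖z + (j:ℂ)‖ := hδle j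
    have h4 : k * ‖z‖ ≤ k * (‖z + (j:ℂ)‖ + (j:ℝ)) :=
      mul_le_mul_of_nonneg_left h2 hk.le
    have h5 : k * (j:ℝ) ≤ k * (n:ℝ) := mul_le_mul_of_nonneg_left hjn hk.le
    have h6 : k*(n:ℝ) + ‖sμ‖ = ((k*(n:ℝ) + ‖sμ‖)/δ)*δ := by
      field_simp
    have h7 : ((k*(n:ℝ)+‖sμ‖)/δ)*δ ≤ ((k*(n:ℝ)+‖sμ‖)/δ)*‖z+(j:ℂ)‖ := by
      apply mul_le_mul_of_nonneg_left h3
      positivity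
    rw [hM]
    nlinarith [norm_nonneg sμ]
  have hpow : ‖γ-γ'+sμ‖^n ≤ M^n * ∏ j ∈ range n, ‖z+(j:ℂ)‖ := by
    calc ‖γ-γ'+sμ‖^n = ∏ _j ∈ range n, ‖γ-γ'+sμ‖ := by
          rw [Finset.prod_const, Finset.card_range]
      _ ≤ ∏ j ∈ range n, (M * ‖z+(j:ℂ)‖) :=
          Finset.prod_le_prod (fun j _ => norm_nonneg _) hfacb
      _ = M^n * ∏ j ∈ range n, ‖z+(j:ℂ)‖ := by
          rw [Finset.prod_mul_distrib, Finset.prod_const, Finset.card_range]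
  have hprodpos : 0 < ∏ j ∈ range n, ‖z+(j:ℂ)‖ :=
    Finset.prod_pos (fun j _ => lt_of_lt_of_le hδ0 (hδle j))
  rw [norm_pow, hGz, div_right_comm, norm_div, norm_prod]
  calc ‖γ-γ'+sμ‖^n *
        (‖Complex.Gamma (z+(n:ℂ)) / Complex.Gamma (γ/k)‖ /
          ∏ j ∈ range n, ‖z+(j:ℂ)‖)
      = (‖γ-γ'+sμ‖^n / ∏ j ∈ range n, ‖z+(j:ℂ)‖) *
          ‖Complex.Gamma (z+(n:ℂ)) / Complex.Gamma (γ/k)‖ := by ring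
    _ ≤ M^n * C₀ := by
        apply mul_le_mul ((div_le_iff₀ hprodpos).mpr hpow) hcore (norm_nonneg _)
          (by positivity)
end
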